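/- Let X and Y be nonempty compact subsets of ℂ with Y ⊆ X. If R(X) has no non-zero bounded point derivation at any point of X, then R(Y) has no non-zero bounded point derivation at any point of Y. -/

import Mathlib

open Metric Set

/-- `R₀(X)`: the restrictions to `X` of rational functions with poles off `X`, i.e. quotients
`p/q` of complex polynomials with `q` nonvanishing on `X`. -/
def R0set (X : Set ℂ) : Set C(X, ℂ) :=
  {f | ∃ p q : Polynomial ℂ, (∀ x : X, q.eval (x : ℂ) ≠ 0) ∧
    ∀ x : X, f x = p.eval (x : ℂ) / q.eval (x : ℂ)}

/-- `R(X)`: the uniform closure in `C(X, ℂ)` of the rational functions with poles off `X`.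
(On the compact space `X` the topology of `C(X, ℂ)` is that of uniform convergence.) -/
noncomputable def Rx (X : Set ℂ) [CompactSpace X] : Subalgebra ℂ C(X, ℂ) :=
  (Algebra.adjoin ℂ (R0set X)).topologicalClosure

/-- A bounded point derivation on `R(X)` at `x`: a continuous linear functional `d` on `R(X)`
satisfying `d(fg) = f(x)d(g) + d(f)g(x)` for all `f, g ∈ R(X)`. -/
def IsBPD (X : Set ℂ) [CompactSpace X] (x : X) (d : Rx X →L[ℂ] ℂ) : Prop :=
  ∀ f g : Rx X, d (f * g) = (f : C(X, ℂ)) x * d g + d f * (g : C(X, ℂ)) x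

/-- `R(X)` is regular: for every closed `E ⊆ X` and `x ∈ X ∖ E` there is `f ∈ R(X)` with
`f(x) = 1` and `f ≡ 0` on `E`. -/
def RxRegular (X : Set ℂ) [CompactSpace X] : Prop :=
  ∀ E : Set X, IsClosed E → ∀ x : X, x ∉ E →
    ∃ f ∈ Rx X, f x = 1 ∧ ∀ y ∈ E, f y = 0

section Aux

set_option linter.unusedSectionVars false

/-! ### Auxiliary material for `stmt_1` -/

variable {X Y : Set ℂ} [CompactSpace X] [CompactSpace Y]

/-- The inclusion map `Y → X` as a continuous map. -/
def inclYX (hYX : Y ⊆ X) : C(Y, X) :=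
  ⟨fun z => ⟨z.1, hYX z.2⟩, Continuous.subtype_mk continuous_subtype_val _⟩

/-- Restriction of functions on `X` to functions on `Y`, as an algebra homomorphism. -/
noncomputable def restYX (hYX : Y ⊆ X) : C(X, ℂ) →ₐ[ℂ] C(Y, ℂ) :=
  ContinuousMap.compRightAlgHom ℂ ℂ (inclYX hYX)

theorem mem_Rx_iff {f : C(X, ℂ)} :
    f ∈ Rx X ↔ f ∈ closure ((Algebra.adjoin ℂ (R0set X) : Subalgebra ℂ C(X,ℂ)) : Set C(X,ℂ)) := by
  constructor
  · intro hf
    have : f ∈ (((Algebra.adjoin ℂ (R0set X)).topologicalClosure :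
        Subalgebra ℂ C(X,ℂ)) : Set C(X,ℂ)) := hf
    rwa [Subalgebra.topologicalClosure_coe] at this
  · intro hf
    show f ∈ (((Algebra.adjoin ℂ (R0set X)).topologicalClosure :
        Subalgebra ℂ C(X,ℂ)) : Set C(X,ℂ))
    rwa [Subalgebra.topologicalClosure_coe]

theorem R0set_subset_Rx : R0set X ⊆ (Rx X : Set C(X,ℂ)) := fun _ hf =>
  mem_Rx_iff.mpr (subset_closure (Algebra.subset_adjoin hf))

theorem restYX_mem (hYX : Y ⊆ X) {f : C(X, ℂ)} (hf : f ∈ Rx X) :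
    restYX hYX f ∈ Rx Y := by
  have hcont : Continuous (restYX hYX) := ContinuousMap.compRightAlgHom_continuous ℂ ℂ _
  have h1 : f ∈ closure ((Algebra.adjoin ℂ (R0set X) : Subalgebra ℂ C(X,ℂ)) : Set C(X,ℂ)) :=
    mem_Rx_iff.mp hf
  have h2 : restYX hYX f ∈ closure (restYX hYX ''
      ((Algebra.adjoin ℂ (R0set X) : Subalgebra ℂ C(X,ℂ)) : Set C(X,ℂ))) :=
    (image_closure_subset_closure_image hcont) (mem_image_of_mem _ h1)
  have h3 : restYX hYX '' ((Algebra.adjoin ℂ (R0set X) : Subalgebra ℂ C(X,ℂ)) : Set C(X,ℂ))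
      ⊆ ((Algebra.adjoin ℂ (R0set Y) : Subalgebra ℂ C(Y,ℂ)) : Set C(Y,ℂ)) := by
    rw [← Subalgebra.coe_map, ← Algebra.adjoin_image]
    have hle : Algebra.adjoin ℂ (restYX hYX '' R0set X) ≤ Algebra.adjoin ℂ (R0set Y) := by
      apply Algebra.adjoin_mono
      rintro g ⟨f₀, ⟨p, q, hq, hval⟩, rfl⟩
      exact ⟨p, q, fun y => hq ⟨y.1, hYX y.2⟩, fun y => hval ⟨y.1, hYX y.2⟩⟩
    exact hle
  exact mem_Rx_iff.mpr (closure_mono h3 h2)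

open Classical in
/-- Extension of a function on `X` to `ℂ` by zero. -/
noncomputable def extX (X : Set ℂ) (f : C(X, ℂ)) : ℂ → ℂ :=
  fun z => if h : z ∈ X then f ⟨z, h⟩ else 0

theorem extX_add (f g : C(X, ℂ)) : extX X (f + g) = fun z => extX X f z + extX X g z := by
  funext z; by_cases h : z ∈ X <;> simp [extX, h]

theorem extX_mul (f g : C(X, ℂ)) : extX X (f * g) = fun z => extX X f z * extX X g z := by
  funext z; by_cases h : z ∈ X <;> simp [extX, h]

theorem extX_smul (c : ℂ) (f : C(X, ℂ)) : extX X (c • f) = fun z => c * extX X f z := by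
  funext z; by_cases h : z ∈ X <;> simp [extX, h]

theorem extX_apply_mem {f : C(X, ℂ)} {z : ℂ} (hz : z ∈ X) : extX X f z = f ⟨z, hz⟩ := by
  simp only [extX, dif_pos hz]

theorem extX_diff {a : ℂ} {r : ℝ} (hball : ball a r ⊆ X) {f : C(X, ℂ)} (hf : f ∈ Rx X) :
    DifferentiableOn ℂ (extX X f) (ball a r) := by
  have hS : ∀ g ∈ Algebra.adjoin ℂ (R0set X), DifferentiableOn ℂ (extX X g) (ball a r) := by
    intro g hg
    induction hg using Algebra.adjoin_induction with
    | mem g hg =>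
      obtain ⟨p, q, hq, hval⟩ := hg
      have hd : DifferentiableOn ℂ (fun z => p.eval z / q.eval z) (ball a r) :=
        (p.differentiable.differentiableOn).div (q.differentiable.differentiableOn)
          (fun z hz => hq ⟨z, hball hz⟩)
      refine hd.congr fun z hz => ?_
      simp only [extX, dif_pos (hball hz)]
      exact hval ⟨z, hball hz⟩
    | algebraMap c =>
      refine (differentiableOn_const c).congr fun z hz => ?_
      simp only [extX, dif_pos (hball hz)]
      rfl
    | add x y hx hy hx' hy' => rw [extX_add]; exact hx'.add hy'
    | mul x y hx hy hx' hy' => rw [extX_mul]; exact hx'.mul hy'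
  rw [mem_Rx_iff] at hf
  obtain ⟨u, hu_mem, hu_tend⟩ := mem_closure_iff_seq_limit.mp hf
  have tlu : TendstoUniformlyOn (fun n z => extX X (u n) z) (extX X f) Filter.atTop (ball a r) := by
    rw [Metric.tendstoUniformlyOn_iff]
    intro ε hε
    obtain ⟨N, hN⟩ := Metric.tendsto_atTop.mp hu_tend ε hε
    refine Filter.eventually_atTop.mpr ⟨N, fun n hn z hz => ?_⟩
    have h1 : dist (extX X f z) (extX X (u n) z) = dist (f ⟨z, hball hz⟩) ((u n) ⟨z, hball hz⟩) := by
      simp only [extX, dif_pos (hball hz)]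
    rw [h1]
    calc dist (f ⟨z, hball hz⟩) ((u n) ⟨z, hball hz⟩) ≤ dist f (u n) :=
          ContinuousMap.dist_apply_le_dist _
      _ = dist (u n) f := dist_comm _ _
      _ < ε := hN n hn
  exact tlu.tendstoLocallyUniformlyOn.differentiableOn
    (Filter.Eventually.of_forall fun n => hS _ (hu_mem n)) isOpen_ball

set_option synthInstance.maxHeartbeats 1000000 in
theorem interior_empty_of_noBPD (X : Set ℂ) [CompactSpace X]
    (h : ∀ (x : X) (d : Rx X →L[ℂ] ℂ), IsBPD X x d → d = 0) : interior X = ∅ := by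
  by_contra hne
  obtain ⟨a, ha⟩ := Set.nonempty_iff_ne_empty.mpr hne
  obtain ⟨r, hr, hball⟩ := Metric.mem_nhds_iff.mp (mem_interior_iff_mem_nhds.mp ha)
  have hax : a ∈ X := hball (mem_ball_self hr)
  have hmemball : a ∈ ball a r := mem_ball_self hr
  have hdiff : ∀ f : Rx X, DifferentiableAt ℂ (extX X (f : C(X,ℂ))) a := fun f =>
    (extX_diff hball f.2).differentiableAt (isOpen_ball.mem_nhds hmemball)
  set L : Rx X →ₗ[ℂ] ℂ :=
    { toFun := fun f => deriv (extX X (f : C(X,ℂ))) a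
      map_add' := by
        intro f g
        show deriv (extX X ((f : C(X,ℂ)) + g)) a = _
        rw [extX_add, deriv_fun_add (hdiff f) (hdiff g)]
      map_smul' := by
        intro c f
        show deriv (extX X (c • (f : C(X,ℂ)))) a = _
        rw [extX_smul, deriv_const_mul c (hdiff f)]
        rfl } with hL
  have hbound : ∀ f : Rx X, ‖L f‖ ≤ (2 / r) * ‖f‖ := by
    intro f
    have key : ∀ ε > (0:ℝ), ‖L f‖ ≤ (2 * ‖f‖ + ε) / r := by
      intro ε hε
      refine Complex.norm_deriv_le_div_of_mapsTo_ball (extX_diff hball f.2) ?_ hr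
      intro z hz
      rw [mem_closedBall]
      apply le_of_lt
      calc dist (extX X (f : C(X,ℂ)) z) (extX X (f : C(X,ℂ)) a)
          ≤ ‖extX X (f : C(X,ℂ)) z‖ + ‖extX X (f : C(X,ℂ)) a‖ := dist_le_norm_add_norm _ _
        _ ≤ ‖f‖ + ‖f‖ := by
            rw [extX_apply_mem (hball hz), extX_apply_mem hax]
            exact add_le_add (ContinuousMap.norm_coe_le_norm _ _)
              (ContinuousMap.norm_coe_le_norm _ _)
        _ = 2 * ‖f‖ := by ring
        _ < 2 * ‖f‖ + ε := lt_add_of_pos_right _ hε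
    refine le_of_forall_pos_le_add fun ε hε => ?_
    calc ‖L f‖ ≤ (2 * ‖f‖ + ε * r) / r := key (ε * r) (mul_pos hε hr)
      _ = 2 / r * ‖f‖ + ε := by field_simp
  set D : Rx X →L[ℂ] ℂ := L.mkContinuous (2 / r) hbound with hD
  have hbpd : IsBPD X ⟨a, hax⟩ D := by
    intro f g
    show deriv (extX X ((f * g : Rx X) : C(X,ℂ))) a = _
    have hfg : ((f * g : Rx X) : C(X,ℂ)) = (f : C(X,ℂ)) * (g : C(X,ℂ)) := rfl
    rw [hfg, extX_mul, deriv_fun_mul (hdiff f) (hdiff g)]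
    have h1 : extX X (f : C(X,ℂ)) a = (f : C(X,ℂ)) ⟨a, hax⟩ := extX_apply_mem hax
    have h2 : extX X (g : C(X,ℂ)) a = (g : C(X,ℂ)) ⟨a, hax⟩ := extX_apply_mem hax
    have hDf : D f = deriv (extX X (f:C(X,ℂ))) a := rfl
    have hDg : D g = deriv (extX X (g:C(X,ℂ))) a := rfl
    rw [h1, h2, hDf, hDg]
    ring
  have hD0 := h ⟨a, hax⟩ D hbpd
  have hid : (⟨fun x => (x : ℂ), continuous_subtype_val⟩ : C(X,ℂ)) ∈ Rx X := by
    apply R0set_subset_Rx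
    exact ⟨Polynomial.X, 1, fun x => by simp, fun x => by simp⟩
  set fid : Rx X := ⟨⟨fun x => (x : ℂ), continuous_subtype_val⟩, hid⟩ with hfid
  have hDfid : D fid = 1 := by
    show deriv (extX X (fid : C(X,ℂ))) a = 1
    have heq : extX X (fid : C(X,ℂ)) =ᶠ[nhds a] id := by
      filter_upwards [isOpen_ball.mem_nhds hmemball] with z hz
      rw [extX_apply_mem (hball hz)]
      rfl
    rw [heq.deriv_eq, deriv_id]
  rw [hD0] at hDfid
  simp at hDfid

/-- Rational functions on `Y` whose poles lie off the larger set `X`. -/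
def S0 (X Y : Set ℂ) : Set C(Y, ℂ) :=
  {f | ∃ p q : Polynomial ℂ, (∀ x ∈ X, q.eval x ≠ 0) ∧
    ∀ y : Y, f y = p.eval (y : ℂ) / q.eval (y : ℂ)}

theorem div_step (hYc : IsCompact Y) (hYne : Y.Nonempty) (hYX : Y ⊆ X) (hdense : Dense Xᶜ)
    {g : C(Y, ℂ)} (hg : g ∈ closure (S0 X Y)) {a : ℂ} (ha : a ∉ Y) :
    ∃ g' ∈ closure (S0 X Y), ∀ y : Y, g' y = g y / ((y : ℂ) - a) := by
  have hYclosed : IsClosed Y := hYc.isClosed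
  have hsubne : ∀ y : Y, (y : ℂ) - a ≠ 0 := fun y =>
    sub_ne_zero.mpr (fun he => ha (he ▸ y.2))
  set cm : C(Y, ℂ) := ⟨fun y => g y / ((y : ℂ) - a),
    g.continuous.div (continuous_subtype_val.sub continuous_const) hsubne⟩ with hcm
  refine ⟨cm, ?_, fun y => rfl⟩
  have hδ : 0 < infDist a Y := (hYclosed.notMem_iff_infDist_pos hYne).mp ha
  set δ := infDist a Y with hδdef
  have hδle : ∀ y : Y, δ ≤ ‖(y : ℂ) - a‖ := by
    intro y
    have := infDist_le_dist_of_mem (x := a) y.2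
    rwa [dist_comm, dist_eq_norm] at this
  rw [Metric.mem_closure_iff]
  intro ε hε
  set M : ℝ := ‖g‖ + 1 with hM
  have hMpos : 0 < M := by positivity
  have hε₁ : (0:ℝ) < ε * δ / 8 := by positivity
  obtain ⟨b, hbS, hbdist⟩ := Metric.mem_closure_iff.mp hg (ε * δ / 8) hε₁
  obtain ⟨p', q', hq', hbval⟩ := hbS
  set η : ℝ := min (δ / 2) (ε * δ * δ / (8 * M)) with hη
  have hηpos : 0 < η := lt_min (by positivity) (by positivity)
  obtain ⟨a', ha'X, ha'dist⟩ := hdense.exists_dist_lt a hηpos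
  have ha'X : a' ∉ X := ha'X
  have hsubne' : ∀ x ∈ X, x - a' ≠ 0 := fun x hx he => ha'X (by
    have : x = a' := sub_eq_zero.mp he
    exact this ▸ hx)
  set q'' : Polynomial ℂ := q' * (Polynomial.X - Polynomial.C a') with hq''
  have hq''ne : ∀ x ∈ X, q''.eval x ≠ 0 := by
    intro x hx
    simp only [hq'', Polynomial.eval_mul, Polynomial.eval_sub, Polynomial.eval_X,
      Polynomial.eval_C]
    exact mul_ne_zero (hq' x hx) (hsubne' x hx)
  set b' : C(Y, ℂ) := ⟨fun y => p'.eval (y:ℂ) / q''.eval (y:ℂ),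
    (Polynomial.continuous p').comp continuous_subtype_val |>.div
      ((Polynomial.continuous q'').comp continuous_subtype_val)
      (fun y => hq''ne _ (hYX y.2))⟩ with hb'
  refine ⟨b', ⟨p', q'', hq''ne, fun y => rfl⟩, ?_⟩
  have key : ∀ y : Y, dist (cm y) (b' y) ≤ ε / 4 + ε / 4 := by
    intro y
    have hya : δ ≤ ‖(y:ℂ) - a‖ := hδle y
    have hya'1 : ‖(y:ℂ) - a'‖ ≥ δ - η := by
      have h1 : ‖(y:ℂ) - a‖ - ‖a' - a‖ ≤ ‖(y:ℂ) - a'‖ := by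
        have := norm_sub_norm_le ((y:ℂ) - a) (a' - a)
        simpa using this
      have h2 : ‖a' - a‖ < η := by rw [norm_sub_rev, ← dist_eq_norm]; exact ha'dist
      linarith
    have hηδ2 : η ≤ δ / 2 := min_le_left _ _
    have hya' : δ / 2 ≤ ‖(y:ℂ) - a'‖ := by linarith
    have hya'pos : (0:ℝ) < ‖(y:ℂ) - a'‖ := by linarith [hδ]
    have hyane : (y:ℂ) - a' ≠ 0 := norm_pos_iff.mp hya'pos
    have hq''eval : q''.eval (y:ℂ) = q'.eval (y:ℂ) * ((y:ℂ) - a') := by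
      simp [hq'', Polynomial.eval_mul]
    have hbvaly : b y = p'.eval (y:ℂ) / q'.eval (y:ℂ) := hbval y
    have hb'valy : b' y = (b y) / ((y:ℂ) - a') := by
      show p'.eval (y:ℂ) / q''.eval (y:ℂ) = _
      rw [hq''eval, hbvaly, div_div]
    have htri : dist (cm y) (b' y) ≤
        dist (cm y) (g y / ((y:ℂ) - a')) + dist (g y / ((y:ℂ) - a')) (b' y) :=
      dist_triangle _ _ _
    have hterm2 : dist (g y / ((y:ℂ) - a')) (b' y) ≤ ε / 4 := by
      rw [hb'valy, dist_eq_norm, div_sub_div_same, norm_div]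
      have h1 : ‖g y - b y‖ ≤ ε * δ / 8 := by
        have := ContinuousMap.dist_apply_le_dist (f := g) (g := b) y
        rw [dist_eq_norm] at this
        linarith [le_of_lt hbdist]
      calc ‖g y - b y‖ / ‖(y:ℂ) - a'‖ ≤ (ε * δ / 8) / (δ / 2) := by
            apply div_le_div₀ (by positivity) h1 (by positivity) hya'
        _ = ε / 4 := by field_simp; ring
    have hterm1 : dist (cm y) (g y / ((y:ℂ) - a')) ≤ ε / 4 := by
      have hcmy : cm y = g y / ((y:ℂ) - a) := rfl
      rw [hcmy, dist_eq_norm]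
      have hid : g y / ((y:ℂ) - a) - g y / ((y:ℂ) - a') =
          g y * (a - a') / (((y:ℂ) - a) * ((y:ℂ) - a')) := by
        rw [div_sub_div _ _ (hsubne y) hyane, mul_comm]
        congr 1
        ring
      rw [hid, norm_div, norm_mul, norm_mul]
      have h1 : ‖g y‖ ≤ M := by
        have := ContinuousMap.norm_coe_le_norm g y
        linarith
      have h2 : ‖a - a'‖ ≤ ε * δ * δ / (8 * M) := by
        have h2' : ‖a - a'‖ < η := by rw [← dist_eq_norm]; exact ha'dist
        exact le_trans (le_of_lt h2') (min_le_right _ _)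
      have h3 : δ * (δ / 2) ≤ ‖(y:ℂ) - a‖ * ‖(y:ℂ) - a'‖ :=
        mul_le_mul hya hya' (by positivity) (le_trans (le_of_lt hδ) hya)
      calc ‖g y‖ * ‖a - a'‖ / (‖(y:ℂ) - a‖ * ‖(y:ℂ) - a'‖)
          ≤ M * (ε * δ * δ / (8 * M)) / (δ * (δ / 2)) := by
            apply div_le_div₀ (by positivity)
              (mul_le_mul h1 h2 (norm_nonneg _) (le_of_lt hMpos)) (by positivity) h3
        _ = ε / 4 := by field_simp; ring
    linarith
  have : dist cm b' ≤ ε / 4 + ε / 4 := (ContinuousMap.dist_le (by positivity)).mpr key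
  linarith

theorem approx_aux (hYc : IsCompact Y) (hYne : Y.Nonempty) (hYX : Y ⊆ X) (hdense : Dense Xᶜ)
    (p : Polynomial ℂ) (c : ℂ) (hc : c ≠ 0) :
    ∀ s : Multiset ℂ, (∀ r ∈ s, r ∉ Y) →
      ∃ g ∈ closure (S0 X Y), ∀ y : Y,
        g y = p.eval (y : ℂ) / (c * (s.map (fun r => (y : ℂ) - r)).prod) := by
  intro s
  induction s using Multiset.induction_on with
  | empty =>
    intro _
    refine ⟨⟨fun y => p.eval (y:ℂ) / c, by
      exact ((Polynomial.continuous p).comp continuous_subtype_val).div_const c⟩,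
      subset_closure ⟨p, Polynomial.C c, fun x _ => by simpa using hc, fun y => by simp⟩, ?_⟩
    intro y
    simp
  | cons a s ih =>
    intro hmem
    have ha : a ∉ Y := hmem a (Multiset.mem_cons_self a s)
    have hs : ∀ r ∈ s, r ∉ Y := fun r hr => hmem r (Multiset.mem_cons_of_mem hr)
    obtain ⟨g, hg, hgval⟩ := ih hs
    obtain ⟨g', hg', hg'val⟩ := div_step hYc hYne hYX hdense hg ha
    refine ⟨g', hg', fun y => ?_⟩
    rw [hg'val y, hgval y, Multiset.map_cons, Multiset.prod_cons, div_div]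
    congr 1
    ring

theorem R0set_subset_closure_S0 (hYc : IsCompact Y) (hYne : Y.Nonempty) (hYX : Y ⊆ X)
    (hdense : Dense Xᶜ) : R0set Y ⊆ closure (S0 X Y) := by
  rintro f ⟨p, q, hq, hval⟩
  have hqne : q ≠ 0 := by
    intro h0
    obtain ⟨y, hy⟩ := hYne
    exact hq ⟨y, hy⟩ (by rw [h0]; simp)
  have hlc : q.leadingCoeff ≠ 0 := Polynomial.leadingCoeff_ne_zero.mpr hqne
  have hsplits : q.Splits := IsAlgClosed.splits q
  have hfact := hsplits.eq_prod_roots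
  have hroots : ∀ r ∈ q.roots, r ∉ Y := by
    intro r hr hrY
    exact hq ⟨r, hrY⟩ (Polynomial.isRoot_of_mem_roots hr)
  obtain ⟨g, hg, hgval⟩ := approx_aux hYc hYne hYX hdense p q.leadingCoeff hlc q.roots hroots
  have : f = g := by
    ext y
    rw [hval y, hgval y]
    congr 1
    conv_lhs => rw [hfact]
    rw [Polynomial.eval_mul, Polynomial.eval_C, Polynomial.eval_multiset_prod,
      Multiset.map_map]
    congr 1
    congr 1
    apply Multiset.map_congr rfl
    intro r _
    simp
  rw [this]
  exact hg

end Aux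

set_option maxHeartbeats 1000000 in
set_option synthInstance.maxHeartbeats 1000000 in
/-- if `R(X)` has no non-zero bounded point derivation at any point of `X`
and `Y ⊆ X` (both nonempty compact), then `R(Y)` has no non-zero bounded point derivation
at any point of `Y`. -/
theorem stmt_1 (X Y : Set ℂ) [CompactSpace X] [CompactSpace Y]
    (hXc : IsCompact X) (hYc : IsCompact Y) (hXne : X.Nonempty) (hYne : Y.Nonempty)
    (hYX : Y ⊆ X)
    (h : ∀ (x : X) (d : Rx X →L[ℂ] ℂ), IsBPD X x d → d = 0) :
    ∀ (y : Y) (d : Rx Y →L[ℂ] ℂ), IsBPD Y y d → d = 0 := by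
  intro y d hd
  set x0 : X := ⟨y.1, hYX y.2⟩ with hx0
  -- d kills the constants
  have hd1 : d 1 = 0 := by
    have h2 : d 1 = d 1 + d 1 := by
      have := hd 1 1
      simpa using this
    exact (left_eq_add.mp h2)
  -- d kills restrictions of elements of Rx X
  have hrest0 : ∀ (f : C(X,ℂ)) (hf : f ∈ Rx X), d ⟨restYX hYX f, restYX_mem hYX hf⟩ = 0 := by
    set L : Rx X →ₗ[ℂ] ℂ :=
      { toFun := fun f => d ⟨restYX hYX f.1, restYX_mem hYX f.2⟩
        map_add' := by
          intro f g
          have he : (⟨restYX hYX (f + g).1, restYX_mem hYX (f + g).2⟩ : Rx Y) =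
              ⟨restYX hYX f.1, restYX_mem hYX f.2⟩ + ⟨restYX hYX g.1, restYX_mem hYX g.2⟩ := by
            apply Subtype.ext
            show restYX hYX ((f : C(X,ℂ)) + g) = _
            rw [map_add]
            rfl
          exact (congrArg d he).trans (map_add d _ _)
        map_smul' := by
          intro c f
          have he : (⟨restYX hYX (c • f).1, restYX_mem hYX (c • f).2⟩ : Rx Y) =
              c • ⟨restYX hYX f.1, restYX_mem hYX f.2⟩ := by
            apply Subtype.ext
            show restYX hYX (c • (f : C(X,ℂ))) = _
            rw [map_smul]
            rfl
          exact (congrArg d he).trans (d.map_smul c _) } with hL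
    have hbound : ∀ f : Rx X, ‖L f‖ ≤ ‖d‖ * ‖f‖ := by
      intro f
      calc ‖L f‖ ≤ ‖d‖ * ‖(⟨restYX hYX f.1, restYX_mem hYX f.2⟩ : Rx Y)‖ :=
            d.le_opNorm _
        _ ≤ ‖d‖ * ‖f‖ := by
            apply mul_le_mul_of_nonneg_left _ (norm_nonneg d)
            show ‖restYX hYX f.1‖ ≤ ‖f.1‖
            refine (ContinuousMap.norm_le _ (norm_nonneg _)).mpr fun z => ?_
            exact ContinuousMap.norm_coe_le_norm f.1 _
    set D : Rx X →L[ℂ] ℂ := L.mkContinuous ‖d‖ hbound with hD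
    have hbpd : IsBPD X x0 D := by
      intro f g
      have he : (⟨restYX hYX (f * g).1, restYX_mem hYX (f * g).2⟩ : Rx Y) =
          ⟨restYX hYX f.1, restYX_mem hYX f.2⟩ * ⟨restYX hYX g.1, restYX_mem hYX g.2⟩ := by
        apply Subtype.ext
        show restYX hYX ((f : C(X,ℂ)) * g) = _
        rw [map_mul]
        rfl
      show d ⟨restYX hYX (f * g).1, restYX_mem hYX (f * g).2⟩ = _
      rw [he, hd]
      rfl
    have hD0 := h x0 D hbpd
    intro f hf
    have : D ⟨f, hf⟩ = 0 := by rw [hD0]; rfl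
    exact this
  -- d kills S0
  have hS0 : ∀ f ∈ S0 X Y, ∃ hf : f ∈ Rx Y, d ⟨f, hf⟩ = 0 := by
    rintro f ⟨p, q, hq, hval⟩
    set fX : C(X,ℂ) := ⟨fun x => p.eval (x:ℂ) / q.eval (x:ℂ),
      (Polynomial.continuous p).comp continuous_subtype_val |>.div
        ((Polynomial.continuous q).comp continuous_subtype_val)
        (fun x => hq _ x.2)⟩ with hfX
    have hfXmem : fX ∈ Rx X := R0set_subset_Rx ⟨p, q, fun x => hq _ x.2, fun x => rfl⟩
    have heq : restYX hYX fX = f := by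
      ext yy
      rw [hval yy]
      rfl
    have hfmem : f ∈ Rx Y := heq ▸ restYX_mem hYX hfXmem
    refine ⟨hfmem, ?_⟩
    have h0 := hrest0 fX hfXmem
    have he : (⟨restYX hYX fX, restYX_mem hYX hfXmem⟩ : Rx Y) = ⟨f, hfmem⟩ :=
      Subtype.ext heq
    rwa [he] at h0
  -- the kernel set
  set K : Set C(Y,ℂ) := Subtype.val '' {g : Rx Y | d g = 0} with hK
  have hKmem : ∀ f ∈ K, ∃ hf : f ∈ Rx Y, d ⟨f, hf⟩ = 0 := by
    rintro f ⟨g, hg0, rfl⟩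
    exact ⟨g.2, by rwa [Subtype.coe_eta]⟩
  have hKmem' : ∀ (f : C(Y,ℂ)) (hf : f ∈ Rx Y), d ⟨f, hf⟩ = 0 → f ∈ K := by
    intro f hf h0
    exact ⟨⟨f, hf⟩, h0, rfl⟩
  have hKclosed : IsClosed K := by
    have h1 : IsClosed {g : Rx Y | d g = 0} := isClosed_eq d.continuous continuous_const
    have h2 : IsClosed {f : C(Y,ℂ) | f ∈ Rx Y} := Subalgebra.isClosed_topologicalClosure _
    exact h2.isClosedEmbedding_subtypeVal.isClosedMap _ h1
  -- K contains S0, hence its closure, hence R0set Y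
  have hS0K : S0 X Y ⊆ K := by
    intro f hf
    obtain ⟨hfm, hd0⟩ := hS0 f hf
    exact hKmem' f hfm hd0
  have hintX : interior X = ∅ := interior_empty_of_noBPD X h
  have hdense : Dense Xᶜ := interior_eq_empty_iff_dense_compl.mp hintX
  have hR0K : R0set Y ⊆ K := by
    intro f hf
    have h1 : f ∈ closure (S0 X Y) := R0set_subset_closure_S0 hYc hYne hYX hdense hf
    have h2 : f ∈ closure K := closure_mono hS0K h1
    rwa [hKclosed.closure_eq] at h2
  -- K is a subalgebra
  set A : Subalgebra ℂ C(Y,ℂ) :=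
    { carrier := K
      mul_mem' := by
        rintro p q ⟨g1, hg1, rfl⟩ ⟨g2, hg2, rfl⟩
        refine ⟨g1 * g2, ?_, rfl⟩
        show d (g1 * g2) = 0
        rw [hd g1 g2, hg1, hg2]
        ring
      add_mem' := by
        rintro p q ⟨g1, hg1, rfl⟩ ⟨g2, hg2, rfl⟩
        refine ⟨g1 + g2, ?_, rfl⟩
        show d (g1 + g2) = 0
        rw [map_add, hg1, hg2, add_zero]
      algebraMap_mem' := by
        intro c
        refine ⟨⟨algebraMap ℂ C(Y,ℂ) c, (Rx Y).algebraMap_mem c⟩, ?_, rfl⟩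
        have he : (⟨algebraMap ℂ C(Y,ℂ) c, (Rx Y).algebraMap_mem c⟩ : Rx Y) = c • 1 := by
          apply Subtype.ext
          show algebraMap ℂ C(Y,ℂ) c = _
          rw [Algebra.algebraMap_eq_smul_one]
          rfl
        show d _ = 0
        rw [he, map_smul, hd1, smul_zero] } with hA
  -- conclude : all of Rx Y is contained in K
  have hRxK : (Rx Y : Set C(Y,ℂ)) ⊆ K := by
    have hadj : Algebra.adjoin ℂ (R0set Y) ≤ A := Algebra.adjoin_le hR0K
    intro f hf
    have h1 : f ∈ closure ((Algebra.adjoin ℂ (R0set Y) :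
        Subalgebra ℂ C(Y,ℂ)) : Set C(Y,ℂ)) := mem_Rx_iff.mp hf
    have h2 : f ∈ closure K := closure_mono (fun z hz => hadj hz) h1
    rwa [hKclosed.closure_eq] at h2
  ext f
  obtain ⟨hfm, hd0⟩ := hKmem f.1 (hRxK f.2)
  have : (⟨f.1, hfm⟩ : Rx Y) = f := Subtype.ext rfl
  rw [← this]
  simpa using hd0
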